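/- Let σ > 0 and 0 < q ≤ 1/2, and let ω be the privacy loss distribution density of the Poisson-subsampled Gaussian mechanism. Then for all s ≥ 1, ω(s) ≤ σ·e^{ −(σ²s + C)²/(2σ²) }, where C = σ²·log(1/(2q)) − 1/2. -/
import Mathlib


open MeasureTheory Real Set

/-- Density `f_X` of the Poisson-subsampled Gaussian mechanism:
`f(t) = (1/√(2πσ²))·(q e^{−(t−1)²/(2σ²)} + (1−q) e^{−t²/(2σ²)})`. -/
noncomputable def ffun (σ q : ℝ) (t : ℝ) : ℝ :=
  (1 / Real.sqrt (2 * Real.pi * σ ^ 2)) *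
    (q * Real.exp (-(t - 1) ^ 2 / (2 * σ ^ 2)) + (1 - q) * Real.exp (-t ^ 2 / (2 * σ ^ 2)))

/-- Inverse privacy loss function `g(s) = σ²·log((e^s − (1−q))/q) + 1/2`. -/
noncomputable def gfun (σ q : ℝ) (s : ℝ) : ℝ :=
  σ ^ 2 * Real.log ((Real.exp s - (1 - q)) / q) + 1 / 2

/-- Derivative `g'(s) = σ² e^s / (e^s − (1−q))`. -/
noncomputable def gderiv (σ q : ℝ) (s : ℝ) : ℝ :=
  σ ^ 2 * Real.exp s / (Real.exp s - (1 - q))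

/-- Privacy loss distribution density of the Poisson-subsampled Gaussian mechanism:
`ω(s) = f(g(s))·g'(s)` for `s > log(1−q)` and `0` otherwise. -/
noncomputable def pld (σ q : ℝ) : ℝ → ℝ :=
  (Set.Ioi (Real.log (1 - q))).indicator (fun s => ffun σ q (gfun σ q s) * gderiv σ q s)

set_option maxHeartbeats 1600000 in
/-- tail bound for the PLD density of the Poisson-subsampled Gaussian
mechanism: for `0 < q ≤ 1/2` and `s ≥ 1`,
`ω(s) ≤ σ e^{−(σ²s + C)²/(2σ²)}` with `C = σ² log(1/(2q)) − 1/2`. -/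
theorem pld_tail_bound
    (σ q : ℝ) (hσ : 0 < σ) (hq0 : 0 < q) (hq : q ≤ 1 / 2) :
    ∀ s : ℝ, 1 ≤ s →
      pld σ q s ≤ σ *
        Real.exp (-(σ ^ 2 * s + (σ ^ 2 * Real.log (1 / (2 * q)) - 1 / 2)) ^ 2 /
          (2 * σ ^ 2)) := by
  intro s hs
  have hσ2 : (0:ℝ) < σ ^ 2 := by positivity
  have h1q : (0:ℝ) < 1 - q := by linarith
  have hEge : s + 1 ≤ Real.exp s := Real.add_one_le_exp s
  have hE2 : 2 * (1 - q) ≤ Real.exp s := by linarith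
  have hEpos : (0:ℝ) < Real.exp s := Real.exp_pos s
  have hD : (0:ℝ) < Real.exp s - (1 - q) := by linarith
  have hlog : Real.log (1 - q) < s := by
    have : Real.log (1 - q) ≤ 0 := Real.log_nonpos (by linarith) (by linarith)
    linarith
  rw [pld, Set.indicator_of_mem (by simpa using hlog)]
  have hu_pos : 0 < (Real.exp s - (1 - q)) / q := by positivity
  have hu_ge : Real.exp s / (2 * q) ≤ (Real.exp s - (1 - q)) / q := by
    rw [div_le_div_iff₀ (by positivity) hq0]
    nlinarith
  have hA1 : 1 ≤ s + Real.log (1 / (2 * q)) := by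
    have : (0:ℝ) ≤ Real.log (1 / (2 * q)) := by
      apply Real.log_nonneg
      rw [le_div_iff₀ (by positivity)]; linarith
    linarith
  have hlogu : s + Real.log (1 / (2 * q)) ≤ Real.log ((Real.exp s - (1 - q)) / q) := by
    have h1 : Real.log (Real.exp s / (2 * q)) ≤ Real.log ((Real.exp s - (1 - q)) / q) :=
      Real.log_le_log (by positivity) hu_ge
    have h2 : Real.log (Real.exp s / (2 * q)) = s + Real.log (1 / (2 * q)) := by
      rw [Real.log_div (ne_of_gt hEpos) (by positivity), Real.log_exp,
        Real.log_div one_ne_zero (by positivity), Real.log_one]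
      ring
    linarith
  set L : ℝ := Real.log ((Real.exp s - (1 - q)) / q) with hL_def
  set A : ℝ := s + Real.log (1 / (2 * q)) with hA_def
  clear_value L A
  have ht_eq : gfun σ q s = σ ^ 2 * L + 1 / 2 := by rw [gfun, ← hL_def]
  have hB_pos : 0 < σ ^ 2 * A + 1 / 2 := by
    nlinarith [mul_le_mul_of_nonneg_left hA1 hσ2.le]
  have htB : σ ^ 2 * A + 1 / 2 ≤ σ ^ 2 * L + 1 / 2 := by
    nlinarith [mul_le_mul_of_nonneg_left hlogu hσ2.le]
  -- key identity for ffun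
  have hexpu : Real.exp ((2 * (σ ^ 2 * L + 1 / 2) - 1) / (2 * σ ^ 2))
      = (Real.exp s - (1 - q)) / q := by
    have h3 : (2 * (σ ^ 2 * L + 1 / 2) - 1) / (2 * σ ^ 2) = L := by
      field_simp; ring
    rw [h3, hL_def, Real.exp_log hu_pos]
  have hqu : q * ((Real.exp s - (1 - q)) / q) = Real.exp s - (1 - q) := by
    field_simp
  have hf : ffun σ q (gfun σ q s) =
      (1 / Real.sqrt (2 * Real.pi * σ ^ 2)) *
        (Real.exp (-(σ ^ 2 * L + 1 / 2) ^ 2 / (2 * σ ^ 2)) * Real.exp s) := by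
    rw [ffun, ht_eq]
    congr 1
    have h1 : -((σ ^ 2 * L + 1 / 2) - 1) ^ 2 / (2 * σ ^ 2)
        = -(σ ^ 2 * L + 1 / 2) ^ 2 / (2 * σ ^ 2)
          + (2 * (σ ^ 2 * L + 1 / 2) - 1) / (2 * σ ^ 2) := by
      field_simp; ring
    rw [h1, Real.exp_add, hexpu]
    set X : ℝ := Real.exp (-(σ ^ 2 * L + 1 / 2) ^ 2 / (2 * σ ^ 2))
    calc q * (X * ((Real.exp s - (1 - q)) / q)) + (1 - q) * X
        = X * (q * ((Real.exp s - (1 - q)) / q) + (1 - q)) := by ring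
      _ = X * Real.exp s := by rw [hqu]; ring
  rw [hf, gderiv]
  have hsqrt : Real.sqrt (2 * Real.pi * σ ^ 2) = Real.sqrt (2 * Real.pi) * σ := by
    rw [Real.sqrt_mul (by positivity), Real.sqrt_sq hσ.le]
  have hsqrt2 : (2:ℝ) ≤ Real.sqrt (2 * Real.pi) := by
    have h4 : (4:ℝ) ≤ 2 * Real.pi := by nlinarith [Real.pi_gt_three]
    have h5 := Real.sqrt_le_sqrt h4
    rwa [show (4:ℝ) = 2 ^ 2 by norm_num, Real.sqrt_sq (by norm_num)] at h5
  have hderiv_le : σ ^ 2 * Real.exp s / (Real.exp s - (1 - q)) ≤ 2 * σ ^ 2 := by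
    rw [div_le_iff₀ hD]; nlinarith
  have hderiv_pos : 0 < σ ^ 2 * Real.exp s / (Real.exp s - (1 - q)) := by positivity
  have hX : Real.exp (-(σ ^ 2 * L + 1 / 2) ^ 2 / (2 * σ ^ 2))
      ≤ Real.exp (-(σ ^ 2 * A + 1 / 2) ^ 2 / (2 * σ ^ 2)) := by
    apply Real.exp_le_exp.mpr
    apply div_le_div_of_nonneg_right _ (by positivity)
    have hsq := pow_le_pow_left₀ hB_pos.le htB 2
    linarith
  have hK : (0:ℝ) < 1 / Real.sqrt (2 * Real.pi * σ ^ 2) := by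
    rw [hsqrt]; positivity
  have hBT : σ ^ 2 * s + (σ ^ 2 * Real.log (1 / (2 * q)) - 1 / 2)
      = (σ ^ 2 * A + 1 / 2) - 1 := by
    rw [hA_def]; ring
  have hexp2q : Real.exp (s - A) = 2 * q := by
    rw [hA_def, Real.log_div one_ne_zero (by positivity), Real.log_one,
      show s - (s + (0 - Real.log (2 * q))) = Real.log (2 * q) by ring]
    exact Real.exp_log (by positivity)
  have hEXE : Real.exp (-(σ ^ 2 * A + 1 / 2) ^ 2 / (2 * σ ^ 2)) * Real.exp s
      = 2 * q * Real.exp (-((σ ^ 2 * A + 1 / 2) - 1) ^ 2 / (2 * σ ^ 2)) := by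
    rw [← Real.exp_add]
    have harg : -(σ ^ 2 * A + 1 / 2) ^ 2 / (2 * σ ^ 2) + s
        = (s - A) + -((σ ^ 2 * A + 1 / 2) - 1) ^ 2 / (2 * σ ^ 2) := by
      field_simp; ring
    rw [harg, Real.exp_add, hexp2q]
  rw [hBT]
  set T : ℝ := Real.exp (-((σ ^ 2 * A + 1 / 2) - 1) ^ 2 / (2 * σ ^ 2)) with hT_def
  have hT_pos : 0 < T := Real.exp_pos _
  calc 1 / Real.sqrt (2 * Real.pi * σ ^ 2) *
        (Real.exp (-(σ ^ 2 * L + 1 / 2) ^ 2 / (2 * σ ^ 2)) * Real.exp s) *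
        (σ ^ 2 * Real.exp s / (Real.exp s - (1 - q)))
      ≤ 1 / Real.sqrt (2 * Real.pi * σ ^ 2) *
        (Real.exp (-(σ ^ 2 * A + 1 / 2) ^ 2 / (2 * σ ^ 2)) * Real.exp s) *
        (2 * σ ^ 2) := by
        apply mul_le_mul
        · exact mul_le_mul_of_nonneg_left
            (mul_le_mul_of_nonneg_right hX hEpos.le) hK.le
        · exact hderiv_le
        · exact hderiv_pos.le
        · positivity
    _ = (2 * σ ^ 2 / (Real.sqrt (2 * Real.pi) * σ)) * (2 * q) * T := by
        rw [hEXE, hsqrt]; ring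
    _ ≤ σ * T := by
        apply mul_le_mul_of_nonneg_right _ hT_pos.le
        rw [div_mul_eq_mul_div, div_le_iff₀ (by positivity)]
        nlinarith
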